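/- Let n ≥ 3 and let σ be a sawtooth dot graph over {1,…,n−1}. If there exists a value k ∈ {1,…,n−1} such that more than n(n−1) entries of the sequence σ are equal to k, then σ is dot reducible. -/

import Mathlib

/-- The underlying sequence of a dot graph given as a list of ascending
segments `(p, q)`: segment `(p, q)` contributes `p, p+1, …, q`. -/
def toSeq (L : List (ℕ × ℕ)) : List ℕ :=
  L.flatMap fun s => List.range' s.1 (s.2 - s.1 + 1)

/-- `L` is the list of maximal ascending segments of a sawtooth dot graph over
`{1, …, n-1}`: `1 ≤ pᵢ ≤ qᵢ ≤ n-1` for all `i`, and `p_{i+1} ≤ q_i` for all `i`. -/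
def IsSawtooth (n : ℕ) (L : List (ℕ × ℕ)) : Prop :=
  (∀ s ∈ L, 1 ≤ s.1 ∧ s.1 ≤ s.2 ∧ s.2 ≤ n - 1) ∧
  ∀ (i : ℕ) (h : i + 1 < L.length),
    (L.get ⟨i + 1, h⟩).1 ≤ (L.get ⟨i, Nat.lt_of_succ_lt h⟩).2

/-- A sawtooth dot graph (given by its segment list) is dot reducible if it
contains a horizontal line, a box, a hexagon of type 1 or 2, a double box, or
a double hexagon. -/
def DotReducible (L : List (ℕ × ℕ)) : Prop :=
  -- horizontal line
  (∃ (i : ℕ) (h : i + 1 < L.length),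
      (L.get ⟨i, Nat.lt_of_succ_lt h⟩).2 = (L.get ⟨i + 1, h⟩).1) ∨
  -- box
  (∃ i j : Fin L.length, i < j ∧
      (L.get i).1 ≤ (L.get j).1 ∧ (L.get i).2 ≤ (L.get j).2) ∨
  -- hexagon of type 1
  (∃ i j l : Fin L.length, i < j ∧ j < l ∧
      (L.get i).1 ≤ (L.get j).1 ∧ (L.get i).2 ≤ (L.get l).2 ∧
      (L.get l).1 ≤ (L.get j).2) ∨
  -- hexagon of type 2
  (∃ i j l : Fin L.length, i < j ∧ j < l ∧
      (L.get i).1 ≤ (L.get l).1 ∧ (L.get j).2 ≤ (L.get l).2 ∧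
      (L.get j).1 ≤ (L.get i).2) ∨
  -- double box
  (∃ i j l : Fin L.length, i < j ∧ j < l ∧
      (L.get i).2 ≤ (L.get j).2 ∧ (L.get j).1 ≤ (L.get l).1 ∧
      (L.get i).1 ≤ (L.get l).2 + 1) ∨
  -- double hexagon
  (∃ i j l m : Fin L.length, i < j ∧ j ≤ l ∧ l < m ∧
      (L.get i).1 ≤ (L.get j).1 ∧ (L.get l).2 ≤ (L.get m).2)

/-- The spindle at `k` over `{1, …, n-1}`: segments `(s, n-1)` for
`s = n-1` down to `k+2`, then `(1, n-1)`, then `(1, t)` for `t = k` down to `1`. -/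
def spindle (n k : ℕ) : List (ℕ × ℕ) :=
  ((List.range (n - 2 - k)).map fun i => (n - 1 - i, n - 1)) ++
    [(1, n - 1)] ++
    ((List.range k).map fun i => (1, k - i))

/-- `L` is a maximal dot irreducible sawtooth dot graph over `{1, …, n-1}`:
it is dot irreducible, and every sawtooth dot graph over `{1, …, n-1}`
containing it as a proper subsequence is dot reducible. -/
def MaxDotIrreducible (n : ℕ) (L : List (ℕ × ℕ)) : Prop :=
  IsSawtooth n L ∧ ¬ DotReducible L ∧
  ∀ M : List (ℕ × ℕ), IsSawtooth n M → List.Sublist (toSeq L) (toSeq M) →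
    toSeq L ≠ toSeq M → DotReducible M

lemma count_toSeq_le (k : ℕ) (L : List (ℕ × ℕ)) : (toSeq L).count k ≤ L.length := by
  induction L with
  | nil => simp [toSeq]
  | cons a L ih =>
    simp only [toSeq, List.flatMap_cons, List.count_append, List.length_cons]
    have h1 : (List.range' a.1 (a.2 - a.1 + 1)).count k ≤ 1 :=
      List.nodup_iff_count_le_one.1 (List.nodup_range' 1 Nat.one_pos) k
    simp only [toSeq] at ih; omega

lemma pigeonhole (n : ℕ) (L : List (ℕ × ℕ))
    (hmem : ∀ s ∈ L, 1 ≤ s.1 ∧ s.1 ≤ s.2 ∧ s.2 ≤ n - 1)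
    (hlen : (n-1) * (n-1) < L.length) : ¬ L.Nodup := by
  intro hnd
  have hsub : L.toFinset ⊆ (Finset.Icc 1 (n-1)) ×ˢ (Finset.Icc 1 (n-1)) := by
    intro s hs
    rw [List.mem_toFinset] at hs
    obtain ⟨h1, h2, h3⟩ := hmem s hs
    simp [Finset.mem_product, Finset.mem_Icc]
    omega
  have := Finset.card_le_card hsub
  rw [List.toFinset_card_of_nodup hnd] at this
  simp [Finset.card_product, Nat.card_Icc] at this
  omega

/-- If some value `k ∈ {1, …, n-1}` occurs more than `n(n-1)` times in the
underlying sequence of a sawtooth dot graph over `{1, …, n-1}`, then the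
graph is dot reducible. -/
theorem many_repeats_dot_reducible (n : ℕ) (hn : 3 ≤ n)
    (L : List (ℕ × ℕ)) (hL : IsSawtooth n L)
    (h : ∃ k : ℕ, 1 ≤ k ∧ k ≤ n - 1 ∧ n * (n - 1) < (toSeq L).count k) :
    DotReducible L := by
  obtain ⟨k, -, -, hcount⟩ := h
  have hle := count_toSeq_le k L
  have hmul : (n-1)*(n-1) ≤ n*(n-1) := Nat.mul_le_mul_right _ (by omega)
  have hnd := pigeonhole n L hL.1 (by omega)
  rw [List.nodup_iff_injective_get] at hnd
  simp only [Function.Injective, not_forall] at hnd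
  obtain ⟨i, j, heq, hne⟩ := hnd
  right; left
  rcases lt_or_gt_of_ne hne with hlt | hlt
  · exact ⟨i, j, hlt, le_of_eq (congrArg Prod.fst heq), le_of_eq (congrArg Prod.snd heq)⟩
  · exact ⟨j, i, hlt, le_of_eq (congrArg Prod.fst heq.symm),
      le_of_eq (congrArg Prod.snd heq.symm)⟩
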